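/- Let V and W be complex Hilbert spaces, B, B' ∈ Hom(W,V), and C, C' ∈ End⁺W (self-adjoint positive invertible). Then (B + B')(C + C')⁻¹(B + B')* ≤ B C⁻¹ B* + B' C'⁻¹ B'*. -/

import Mathlib

open Complex Metric Filter Set ContinuousLinearMap
open scoped InnerProductSpace

noncomputable section

variable {V W : Type*} [NormedAddCommGroup V] [InnerProductSpace ℂ V] [CompleteSpace V]
  [NormedAddCommGroup W] [InnerProductSpace ℂ W] [CompleteSpace W]

/-- Loewner order on operators: `opLE S T` means `S ≤ T`. -/
def opLE (S T : V →L[ℂ] V) : Prop := ∀ v : V, 0 ≤ (T - S).reApplyInnerSelf v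

/-- `End⁺W`: self-adjoint positive invertible operators. -/
def IsPosInv (P : W →L[ℂ] W) : Prop :=
  IsSelfAdjoint P ∧ ∃ ε : ℝ, 0 < ε ∧ ∀ w : W, ε * ‖w‖ ^ 2 ≤ P.reApplyInnerSelf w

lemma IsPosInv.add {C C' : W →L[ℂ] W} (h : IsPosInv C) (h' : IsPosInv C') :
    IsPosInv (C + C') := by
  obtain ⟨hs, ε, hε, hcoer⟩ := h
  obtain ⟨hs', ε', hε', hcoer'⟩ := h'
  refine ⟨hs.add hs', ε + ε', by positivity, fun w => ?_⟩
  have := hcoer w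
  have := hcoer' w
  simp only [ContinuousLinearMap.reApplyInnerSelf_apply, ContinuousLinearMap.add_apply,
    inner_add_left, map_add, RCLike.re_to_complex] at *
  linarith

lemma IsPosInv.norm_le {C : W →L[ℂ] W} (h : IsPosInv C) :
    ∃ ε : ℝ, 0 < ε ∧ ∀ w : W, ε * ‖w‖ ≤ ‖C w‖ := by
  obtain ⟨hs, ε, hε, hcoer⟩ := h
  refine ⟨ε, hε, fun w => ?_⟩
  rcases eq_or_ne w 0 with rfl | hw
  · simp
  have hwpos : 0 < ‖w‖ := norm_pos_iff.mpr hw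
  have h1 : ε * ‖w‖ ^ 2 ≤ ‖C w‖ * ‖w‖ := by
    calc ε * ‖w‖ ^ 2 ≤ C.reApplyInnerSelf w := hcoer w
    _ = Complex.re ⟪C w, w⟫_ℂ := rfl
    _ ≤ ‖(⟪C w, w⟫_ℂ : ℂ)‖ := Complex.re_le_norm _
    _ ≤ ‖C w‖ * ‖w‖ := norm_inner_le_norm _ _
  nlinarith

lemma IsPosInv.isUnit {C : W →L[ℂ] W} (h : IsPosInv C) : IsUnit C := by
  obtain ⟨ε, hε, hb⟩ := h.norm_le
  have hanti : AntilipschitzWith (⟨ε, hε.le⟩ : NNReal)⁻¹ C := by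
    refine ContinuousLinearMap.antilipschitz_of_bound C fun x => ?_
    have h1 := hb x
    have h3 : 0 < ε⁻¹ := inv_pos.mpr hε
    show ‖x‖ ≤ ((⟨ε, hε.le⟩ : NNReal)⁻¹ : NNReal) * ‖C x‖
    have h2 : (((⟨ε, hε.le⟩ : NNReal)⁻¹ : NNReal) : ℝ) = ε⁻¹ := by
      exact NNReal.coe_inv ⟨ε, hε.le⟩
    rw [h2]
    calc ‖x‖ = ε⁻¹ * (ε * ‖x‖) := by field_simp
    _ ≤ ε⁻¹ * ‖C x‖ := mul_le_mul_of_nonneg_left h1 h3.le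
  rw [ContinuousLinearMap.isUnit_iff_bijective]
  refine ⟨hanti.injective, ?_⟩
  have hclosed : IsClosed (LinearMap.range (C : W →ₗ[ℂ] W) : Set W) :=
    by have h := hanti.isClosed_range C.uniformContinuous; exact h
  refine (LinearMap.range_eq_top (f := (C : W →ₗ[ℂ] W))).mp ?_
  haveI : CompleteSpace (LinearMap.range (C : W →ₗ[ℂ] W)) := hclosed.completeSpace_coe
  rw [← (LinearMap.range (C : W →ₗ[ℂ] W)).orthogonal_orthogonal, Submodule.eq_top_iff']
  intro v w hw
  obtain ⟨hs, ε', hε', hcoer⟩ := h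
  have h0 : (⟪C w, w⟫_ℂ : ℂ) = 0 := hw _ ⟨w, rfl⟩
  have h1 : ε' * ‖w‖ ^ 2 ≤ 0 := by
    have := hcoer w
    rwa [ContinuousLinearMap.reApplyInnerSelf_apply, h0] at this
  have : w = 0 := by
    by_contra hne
    have hw0 : 0 < ‖w‖ := norm_pos_iff.mpr hne
    have := mul_pos hε' (pow_pos hw0 2)
    linarith
  simp [this]

lemma inverse_right {C : W →L[ℂ] W} (h : IsPosInv C) (x : W) :
    C (Ring.inverse C x) = x := by
  have := Ring.mul_inverse_cancel C h.isUnit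
  calc C (Ring.inverse C x) = (C * Ring.inverse C) x := rfl
  _ = x := by rw [this]; rfl

/-- Key inequality: `2 re⟪x, w⟫ - re⟪C w, w⟫ ≤ re⟪x, C⁻¹ x⟫`. -/
lemma key {C : W →L[ℂ] W} (hC : IsPosInv C) (x w : W) :
    2 * Complex.re ⟪x, w⟫_ℂ - Complex.re ⟪C w, w⟫_ℂ ≤
      Complex.re ⟪x, Ring.inverse C x⟫_ℂ := by
  set D := (Ring.inverse C : W →L[ℂ] W) with hD
  have hpos : 0 ≤ Complex.re ⟪C (w - D x), w - D x⟫_ℂ := by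
    obtain ⟨hs, ε, hε, hcoer⟩ := hC
    have h1 := hcoer (w - D x)
    rw [ContinuousLinearMap.reApplyInnerSelf_apply] at h1
    simp only [RCLike.re_to_complex] at h1
    nlinarith [sq_nonneg ‖w - D x‖]
  have hCD : C (D x) = x := inverse_right hC x
  have hadjC : ContinuousLinearMap.adjoint C = C := by
    rw [← ContinuousLinearMap.star_eq_adjoint]; exact hC.1
  have hsa : ∀ a b : W, (⟪C a, b⟫_ℂ : ℂ) = ⟪a, C b⟫_ℂ := by
    intro a b
    conv_lhs => rw [← hadjC]
    exact ContinuousLinearMap.adjoint_inner_left C b a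
  have hexp : (⟪C (w - D x), w - D x⟫_ℂ : ℂ)
      = ⟪C w, w⟫_ℂ - ⟪w, x⟫_ℂ - ⟪x, w⟫_ℂ + ⟪x, D x⟫_ℂ := by
    rw [map_sub, inner_sub_left, inner_sub_right, inner_sub_right, hCD]
    rw [hsa w (D x), hCD]
    ring
  have hre : Complex.re ⟪w, x⟫_ℂ = Complex.re ⟪x, w⟫_ℂ := inner_re_symm (𝕜 := ℂ) w x
  rw [hexp] at hpos
  simp only [Complex.add_re, Complex.sub_re] at hpos
  linarith

/-- Lemma 4.5(i): subadditivity of `(B, C) ↦ B C⁻¹ B*`: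
`(B + B')(C + C')⁻¹(B + B')* ≤ B C⁻¹ B* + B' C'⁻¹ B'*`. -/
theorem schur_quotient_subadditive
    (B B' : W →L[ℂ] V) (C C' : W →L[ℂ] W)
    (hC : IsPosInv C) (hC' : IsPosInv C') :
    opLE ((B + B') ∘L Ring.inverse (C + C') ∘L ContinuousLinearMap.adjoint (B + B'))
      (B ∘L Ring.inverse C ∘L ContinuousLinearMap.adjoint B +
        B' ∘L Ring.inverse C' ∘L ContinuousLinearMap.adjoint B') := by
  intro v
  rw [ContinuousLinearMap.reApplyInnerSelf_apply]
  have hCC' : IsPosInv (C + C') := hC.add hC'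
  set x : W := ContinuousLinearMap.adjoint B v with hx
  set x' : W := ContinuousLinearMap.adjoint B' v with hx'
  set w : W := Ring.inverse (C + C') (x + x') with hw
  -- inner products of applied operators
  have hBapp : ∀ (A : W →L[ℂ] V) (z : W), (⟪A z, v⟫_ℂ : ℂ) = ⟪z, ContinuousLinearMap.adjoint A v⟫_ℂ := by
    intro A z
    rw [← ContinuousLinearMap.adjoint_inner_right]
  -- LHS value
  have hsum : C w + C' w = x + x' := by
    have h : (C + C') w = x + x' := inverse_right hCC' (x + x')
    rw [← ContinuousLinearMap.add_apply]
    exact h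
  have hL : Complex.re ⟪((B + B') ∘L Ring.inverse (C + C') ∘L ContinuousLinearMap.adjoint (B + B')) v, v⟫_ℂ
      = Complex.re ⟪x + x', w⟫_ℂ := by
    have hadj : ContinuousLinearMap.adjoint (B + B') v = x + x' := by
      simp [hx, hx']
    have e1 : ((B + B') ∘L Ring.inverse (C + C') ∘L ContinuousLinearMap.adjoint (B + B')) v
        = (B + B') w := by
      rw [ContinuousLinearMap.comp_apply, ContinuousLinearMap.comp_apply, hadj, hw]
    rw [e1, hBapp (B + B') w, hadj]
    exact inner_re_symm (𝕜 := ℂ) w (x + x')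
  have hR : Complex.re ⟪(B ∘L Ring.inverse C ∘L ContinuousLinearMap.adjoint B +
        B' ∘L Ring.inverse C' ∘L ContinuousLinearMap.adjoint B') v, v⟫_ℂ
      = Complex.re ⟪x, Ring.inverse C x⟫_ℂ + Complex.re ⟪x', Ring.inverse C' x'⟫_ℂ := by
    rw [ContinuousLinearMap.add_apply, inner_add_left, Complex.add_re]
    congr 1
    · rw [ContinuousLinearMap.comp_apply, ContinuousLinearMap.comp_apply, hBapp B _, ← hx]
      exact inner_re_symm (𝕜 := ℂ) _ x
    · rw [ContinuousLinearMap.comp_apply, ContinuousLinearMap.comp_apply, hBapp B' _, ← hx']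
      exact inner_re_symm (𝕜 := ℂ) _ x'
  have hkey1 : 2 * Complex.re ⟪x, w⟫_ℂ - Complex.re ⟪C w, w⟫_ℂ ≤
      Complex.re ⟪x, Ring.inverse C x⟫_ℂ := key hC x w
  have hkey2 : 2 * Complex.re ⟪x', w⟫_ℂ - Complex.re ⟪C' w, w⟫_ℂ ≤
      Complex.re ⟪x', Ring.inverse C' x'⟫_ℂ := key hC' x' w
  have hsplit : Complex.re ⟪C w, w⟫_ℂ + Complex.re ⟪C' w, w⟫_ℂ = Complex.re ⟪x + x', w⟫_ℂ := by
    rw [← Complex.add_re, ← inner_add_left, hsum]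
  have hxsplit : Complex.re ⟪x + x', w⟫_ℂ = Complex.re ⟪x, w⟫_ℂ + Complex.re ⟪x', w⟫_ℂ := by
    rw [inner_add_left, Complex.add_re]
  rw [ContinuousLinearMap.sub_apply, inner_sub_left, map_sub]
  simp only [RCLike.re_to_complex]
  rw [hL, hR]
  linarith
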